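/- Let p be an inner function with ⟨p, 𝟙⟩ ≠ 0 (i.e. p̂(0) ≠ 0). Then pH² ∩ 𝟙^⊥ = {z·p·f : f ∈ H²}, and consequently S*(pH² ∩ 𝟙^⊥) = pH², where pH² = {p·f : f ∈ H²}. -/

import Mathlib

open MeasureTheory Complex Filter

noncomputable section

namespace HankelSchmidt

instance fact_two_pi_pos : Fact (0 < 2 * Real.pi) := ⟨Real.two_pi_pos⟩

/-- The circle `𝕋`, realized as `ℝ / 2πℤ`. -/
abbrev Tc : Type := AddCircle (2 * Real.pi)

/-- Normalized arc-length (Haar) measure on the circle. -/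
abbrev muc : Measure Tc := AddCircle.haarAddCircle

/-- The space `L²(𝕋)`. -/
abbrev Ltwo := Lp ℂ 2 muc

/-- The Hardy space `H²`: the subspace of `L²(𝕋)` of functions whose Fourier coefficients
of negative index vanish. -/
def Hardy : Submodule ℂ Ltwo where
  carrier := {f | ∀ n : ℤ, n < 0 → fourierBasis.repr f n = 0}
  add_mem' := by
    intro a b ha hb n hn
    simp [map_add, lp.coeFn_add, ha n hn, hb n hn]
  zero_mem' := by
    intro n hn
    simp
  smul_mem' := by
    intro c a ha n hn
    simp [_root_.map_smul, lp.coeFn_smul, ha n hn]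

theorem hardy_isClosed : IsClosed (Hardy : Set Ltwo) := by
  have hset : (Hardy : Set Ltwo) =
      ⋂ (n : ℤ) (_ : n < 0), {f : Ltwo | fourierBasis.repr f n = 0} := by
    ext f
    simp only [Set.mem_iInter, Set.mem_setOf_eq]
    rfl
  rw [hset]
  refine isClosed_iInter fun n => isClosed_iInter fun hn => ?_
  have hcont : Continuous fun f : Ltwo => fourierBasis.repr f n := by
    have h1 : Continuous fun g : lp (fun _ : ℤ => ℂ) 2 => g n :=
      (continuous_apply n).comp lp.uniformContinuous_coe.continuous
    exact h1.comp fourierBasis.repr.continuous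
  exact isClosed_eq hcont continuous_const

instance : CompleteSpace (Hardy : Submodule ℂ Ltwo) := hardy_isClosed.completeSpace_coe

/-- The Hardy space as a type. -/
abbrev Hd := (Hardy : Submodule ℂ Ltwo)

/-- The orthogonal projection `P : L²(𝕋) → H²`. -/
def P2 : Ltwo → Hd := fun f => Hardy.orthogonalProjectionOnto f

/-- The orthogonal projection `P`, viewed as a map `L²(𝕋) → L²(𝕋)` with range `H²`. -/
def PL : Ltwo → Ltwo := fun f => ((P2 f : Hd) : Ltwo)

theorem fourierCoeff_congr_ae {f g : Tc → ℂ} (h : f =ᵐ[muc] g) (n : ℤ) :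
    fourierCoeff f n = fourierCoeff g n :=
  integral_congr_ae (h.mono fun x hx => by dsimp only; rw [hx])

theorem mem_Hardy_iff {f : Ltwo} :
    f ∈ Hardy ↔ ∀ n : ℤ, n < 0 → fourierCoeff (f : Tc → ℂ) n = 0 := by
  constructor
  · intro hf n hn; rw [← fourierBasis_repr]; exact hf n hn
  · intro hf n hn; rw [fourierBasis_repr]; exact hf n hn

/-- Pointwise multiplication by a bounded measurable function preserves `L²`. -/
theorem memLp_mul_of_bounded {g : Tc → ℂ} (hg : AEStronglyMeasurable g muc) {C : ℝ}
    (hb : ∀ᵐ x ∂muc, ‖g x‖ ≤ C) (f : Ltwo) :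
    MemLp (fun x => g x * (f : Tc → ℂ) x) 2 muc := by
  refine MemLp.of_le_mul (c := C) (Lp.memLp f) (hg.mul (Lp.aestronglyMeasurable f)) ?_
  filter_upwards [hb] with x hx
  rw [norm_mul]
  exact mul_le_mul_of_nonneg_right hx (norm_nonneg _)

theorem fourier_abs (n : ℤ) (x : Tc) : ‖fourier n x‖ = 1 := by
  rw [fourier_apply]; exact Circle.norm_coe _

theorem fourier_norm_one (n : ℤ) (x : Tc) : ‖fourier n x‖ ≤ 1 :=
  le_of_eq (fourier_abs n x)

/-- Multiplication of an `L²` function by the monomial `z^n`. -/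
def mulF (n : ℤ) (f : Ltwo) : Ltwo :=
  (memLp_mul_of_bounded ((map_continuous (fourier n)).aestronglyMeasurable)
    (Eventually.of_forall (fourier_norm_one n)) f).toLp _

theorem mulF_coe (n : ℤ) (f : Ltwo) :
    (mulF n f : Tc → ℂ) =ᵐ[muc] fun x => fourier n x * (f : Tc → ℂ) x :=
  MemLp.coeFn_toLp _

theorem fourierCoeff_fourier_mul (f : Tc → ℂ) (m n : ℤ) :
    fourierCoeff (fun x => fourier m x * f x) n = fourierCoeff f (n - m) := by
  unfold fourierCoeff
  refine integral_congr_ae (Eventually.of_forall fun x => ?_)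
  have h : @fourier (2 * Real.pi) (-(n - m)) x = fourier (-n) x * fourier m x := by
    rw [show -(n - m) = -n + m by ring, fourier_add]
  simp only [smul_eq_mul, h]
  ring

/-- The shift operator `S : H² → H²`, `(Sf)(z) = z·f(z)`. -/
def Sop (f : Hd) : Hd :=
  ⟨mulF 1 (f : Ltwo), by
    rw [mem_Hardy_iff]
    intro n hn
    rw [fourierCoeff_congr_ae (mulF_coe 1 (f : Ltwo)) n, fourierCoeff_fourier_mul]
    exact (mem_Hardy_iff.mp f.2) (n - 1) (by omega)⟩

/-- The adjoint shift `S* : H² → H²`, `S*f = P(z̄·f)`. -/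
def SstarOp (f : Hd) : Hd := P2 (mulF (-1) (f : Ltwo))

/-- The constant function `𝟙 ∈ H²`. -/
def oneH : Hd :=
  ⟨fourierLp 2 0, by
    rw [mem_Hardy_iff]
    intro n hn
    rw [← fourierBasis_repr]
    have h1 : (fourierLp (T := 2 * Real.pi) 2 0) = fourierBasis 0 := by
      rw [coe_fourierBasis]
    rw [h1, HilbertBasis.repr_self, lp.single_apply]
    rw [Pi.single_apply, if_neg (by omega : n ≠ 0)]⟩

/-- The inner product on `H²`, linear in the FIRST argument (the paper's convention
`⟨f, g⟩ = ∫ f ḡ`). -/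
def ipH (f g : Hd) : ℂ := @inner ℂ Ltwo _ (g : Ltwo) (f : Ltwo)

/-- The inner product on `L²(𝕋)`, linear in the FIRST argument. -/
def ipL (f g : Ltwo) : ℂ := @inner ℂ Ltwo _ g f

/-- `θ ∈ H²` is an inner function if `|θ(z)| = 1` a.e. on `𝕋`. -/
def IsInnerFn (θ : Hd) : Prop := ∀ᵐ x ∂muc, ‖((θ : Ltwo) : Tc → ℂ) x‖ = 1

/-- The set `θ·H² ⊆ L²(𝕋)` of pointwise a.e. products `θ·f`, `f ∈ H²`. -/
def thetaHardy (θ : Hd) : Set Ltwo :=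
  {g : Ltwo | ∃ f : Hd, (g : Tc → ℂ) =ᵐ[muc]
    fun x => ((θ : Ltwo) : Tc → ℂ) x * ((f : Ltwo) : Tc → ℂ) x}

/-- The model space `K_θ = H² ∩ (θH²)^⊥`, as a subset of `L²(𝕋)`. -/
def KspaceL (θ : Hd) : Set Ltwo :=
  {h : Ltwo | h ∈ Hardy ∧ ∀ g ∈ thetaHardy θ, ipL h g = 0}

/-- The model space `K_θ`, as a subset of `H²`. -/
def Kspace (θ : Hd) : Set Hd := {h : Hd | (h : Ltwo) ∈ KspaceL θ}

/-- `p` is an isometric multiplier on `K_θ`: `p` is measurable and, for every `h ∈ K_θ`,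
the pointwise product `p·h` lies in `H²` and has the same norm as `h`. -/
def IsIsomMult (p : Tc → ℂ) (θ : Hd) : Prop :=
  Measurable p ∧ ∀ h ∈ Kspace θ, ∃ g : Hd,
    ((g : Ltwo) : Tc → ℂ) =ᵐ[muc] (fun x => p x * ((h : Ltwo) : Tc → ℂ) x) ∧
    ‖(g : Ltwo)‖ = ‖(h : Ltwo)‖

/-- The subspace `p·K_θ = {p·h : h ∈ K_θ}` of `H²`. -/
def wModel (p : Tc → ℂ) (θ : Hd) : Set Hd :=
  {g : Hd | ∃ h ∈ Kspace θ, ((g : Ltwo) : Tc → ℂ) =ᵐ[muc]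
    fun x => p x * ((h : Ltwo) : Tc → ℂ) x}

/-- A bounded Hankel operator on `H²`: a continuous antilinear map `H : H² → H²`
satisfying `S*H = HS`. -/
def IsHankelOp (H : Hd →L⋆[ℂ] Hd) : Prop := ∀ f : Hd, SstarOp (H f) = H (Sop f)

/-- A bounded measurable symbol on the circle (an `L^∞` function). -/
def IsBddFn (u : Tc → ℂ) : Prop := Measurable u ∧ ∃ C : ℝ, ∀ᵐ x ∂muc, ‖u x‖ ≤ C

theorem memLp_mul_conj {u : Tc → ℂ} (hu : IsBddFn u) (f : Ltwo) :
    MemLp (fun x => u x * (starRingEnd ℂ) ((f : Tc → ℂ) x)) 2 muc := by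
  obtain ⟨hmeas, C, hC⟩ := hu
  refine MemLp.of_le_mul (c := C) (Lp.memLp f)
    (hmeas.aestronglyMeasurable.mul
      (continuous_star.comp_aestronglyMeasurable (Lp.aestronglyMeasurable f))) ?_
  filter_upwards [hC] with x hx
  rw [norm_mul, RCLike.norm_conj]
  exact mul_le_mul_of_nonneg_right hx (norm_nonneg _)

/-- The Hankel operator with symbol `u`: `H_u f = P(u·f̄)`, defined on all of `L²(𝕋)`. -/
def hankelL (u : Tc → ℂ) (hu : IsBddFn u) : Ltwo → Ltwo :=
  fun f => PL ((memLp_mul_conj hu f).toLp _)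

/-- The Möbius transformation `μ(z) = (α − z)/(1 − ᾱz)` of the unit disk. -/
def mobius (α z : ℂ) : ℂ := (α - z) / (1 - (starRingEnd ℂ) α * z)

/-- The point `e^{ix} ∈ ℂ` corresponding to `x ∈ 𝕋`. -/
def circlePt (x : Tc) : ℂ := fourier 1 x

/-- The Möbius transformation `μ` viewed as a self-map of `𝕋`. -/
def mobiusT (α : ℂ) (x : Tc) : Tc := ((Complex.arg (mobius α (circlePt x)) : ℝ) : Tc)

/-- The weight `√(1 − |α|²)/(1 − ᾱz)` in the definition of `U_μ`. -/
def umuWeight (α : ℂ) (x : Tc) : ℂ :=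
  (Real.sqrt (1 - ‖α‖ ^ 2) : ℂ) / (1 - (starRingEnd ℂ) α * circlePt x)

/-- `U` is the operator `U_μ`: `(U_μ f)(z) = (√(1 − |α|²)/(1 − ᾱz))·f(μ(z))` a.e. -/
def IsUmu (α : ℂ) (U : Ltwo → Ltwo) : Prop :=
  ∀ f : Ltwo, ((U f : Ltwo) : Tc → ℂ) =ᵐ[muc]
    fun x => umuWeight α x * (f : Tc → ℂ) (mobiusT α x)


/-- The set `p·N = {p·f : f ∈ N}` of a.e. pointwise products, inside `H²`. -/
def mulSetHd (p : Hd) (N : Set Hd) : Set Hd :=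
  {g : Hd | ∃ f ∈ N, ((g : Ltwo) : Tc → ℂ) =ᵐ[muc]
    fun x => ((p : Ltwo) : Tc → ℂ) x * ((f : Ltwo) : Tc → ℂ) x}

theorem Lp_ext' {f g : Ltwo} (h : (f : Tc → ℂ) =ᵐ[muc] (g : Tc → ℂ)) : f = g :=
  MeasureTheory.Lp.ext h

theorem coeff_neg_zero (f : Hd) {n : ℤ} (hn : n < 0) :
    fourierCoeff (((f : Ltwo)) : Tc → ℂ) n = 0 := mem_Hardy_iff.mp f.2 n hn

theorem fourierCoeff_conj (f : Tc → ℂ) (n : ℤ) :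
    fourierCoeff (fun x => (starRingEnd ℂ) (f x)) n = (starRingEnd ℂ) (fourierCoeff f (-n)) := by
  unfold fourierCoeff
  rw [← integral_conj]
  refine integral_congr_ae (Eventually.of_forall fun x => ?_)
  simp only [smul_eq_mul, map_mul, neg_neg]
  rw [← fourier_neg]

theorem inner_norm_le {p : Hd} (hp : IsInnerFn p) :
    ∀ᵐ x ∂muc, ‖((p : Ltwo) : Tc → ℂ) x‖ ≤ 1 := by
  filter_upwards [hp] with x hx
  rw [hx]

theorem memLp_prod (p : Hd) (hp : IsInnerFn p) (f : Hd) :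
    MemLp (fun x => ((p : Ltwo) : Tc → ℂ) x * ((f : Ltwo) : Tc → ℂ) x) 2 muc :=
  memLp_mul_of_bounded (Lp.aestronglyMeasurable _) (inner_norm_le hp) _

theorem fourierCoeff_prod (p f : Hd) (n : ℤ) :
    fourierCoeff (fun x => ((p : Ltwo) : Tc → ℂ) x * ((f : Ltwo) : Tc → ℂ) x) n
      = ∑' m : ℤ, fourierCoeff ((p : Ltwo) : Tc → ℂ) m *
          fourierCoeff ((f : Ltwo) : Tc → ℂ) (n - m) := by
  have hbdd : IsBddFn (fun x : Tc => (fourier n x : ℂ)) :=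
    ⟨(map_continuous (fourier n)).measurable, 1, Eventually.of_forall (fourier_norm_one n)⟩
  set w : Ltwo := (memLp_mul_conj hbdd (f : Ltwo)).toLp _ with hw
  have hwcoe : (w : Tc → ℂ) =ᵐ[muc]
      fun x => fourier n x * (starRingEnd ℂ) (((f : Ltwo)) x) := MemLp.coeFn_toLp _
  have h1 : (@inner ℂ Ltwo _ w (p : Ltwo)) =
      fourierCoeff (fun x => ((p : Ltwo) : Tc → ℂ) x * ((f : Ltwo) : Tc → ℂ) x) n := by
    rw [MeasureTheory.L2.inner_def]
    unfold fourierCoeff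
    refine integral_congr_ae ?_
    filter_upwards [hwcoe] with x hx
    rw [RCLike.inner_apply, hx]
    simp only [map_mul, RingHomCompTriple.comp_apply, RingHom.id_apply, smul_eq_mul,
      Complex.conj_conj]
    rw [← fourier_neg]
    ring
  have hcoeffw : ∀ m : ℤ, fourierBasis.repr w m =
      (starRingEnd ℂ) (fourierCoeff ((f : Ltwo) : Tc → ℂ) (n - m)) := by
    intro m
    rw [fourierBasis_repr, fourierCoeff_congr_ae hwcoe m, fourierCoeff_fourier_mul,
      fourierCoeff_conj]
    congr 1
    ring_nf
  calc fourierCoeff (fun x => ((p : Ltwo) : Tc → ℂ) x * ((f : Ltwo) : Tc → ℂ) x) n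
      = @inner ℂ Ltwo _ w (p : Ltwo) := h1.symm
    _ = @inner ℂ _ _ (fourierBasis.repr w) (fourierBasis.repr (p : Ltwo)) :=
        (fourierBasis.repr.inner_map_map w (p : Ltwo)).symm
    _ = ∑' m : ℤ, (starRingEnd ℂ) (fourierBasis.repr w m) * fourierBasis.repr (p : Ltwo) m := by
        rw [lp.inner_eq_tsum]; refine tsum_congr fun m => ?_; rw [RCLike.inner_apply]; ring
    _ = ∑' m : ℤ, fourierCoeff ((p : Ltwo) : Tc → ℂ) m *
          fourierCoeff ((f : Ltwo) : Tc → ℂ) (n - m) := by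
        refine tsum_congr fun m => ?_
        rw [hcoeffw m, Complex.conj_conj, fourierBasis_repr, mul_comm]

theorem fourierCoeff_prod_neg (p f : Hd) {n : ℤ} (hn : n < 0) :
    fourierCoeff (fun x => ((p : Ltwo) : Tc → ℂ) x * ((f : Ltwo) : Tc → ℂ) x) n = 0 := by
  rw [fourierCoeff_prod]
  rw [tsum_congr (fun m => ?_), tsum_zero]
  rcases lt_or_ge m 0 with h | h
  · rw [coeff_neg_zero p h, zero_mul]
  · rw [coeff_neg_zero f (by omega : n - m < 0), mul_zero]

theorem fourierCoeff_prod_zero (p f : Hd) :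
    fourierCoeff (fun x => ((p : Ltwo) : Tc → ℂ) x * ((f : Ltwo) : Tc → ℂ) x) 0
      = fourierCoeff ((p : Ltwo) : Tc → ℂ) 0 * fourierCoeff ((f : Ltwo) : Tc → ℂ) 0 := by
  rw [fourierCoeff_prod]
  rw [tsum_eq_single (0 : ℤ) (fun m hm => ?_)]
  · norm_num
  rcases lt_or_ge m 0 with h | h
  · rw [coeff_neg_zero p h, zero_mul]
  · rw [coeff_neg_zero f (by omega : (0 : ℤ) - m < 0), mul_zero]

/-- The element `p·f ∈ H²` for `p` inner, `f ∈ H²`. -/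
def prodHd (p : Hd) (hp : IsInnerFn p) (f : Hd) : Hd :=
  ⟨(memLp_prod p hp f).toLp _, by
    rw [mem_Hardy_iff]
    intro n hn
    rw [fourierCoeff_congr_ae (MemLp.coeFn_toLp (memLp_prod p hp f)) n]
    exact fourierCoeff_prod_neg p f hn⟩

theorem prodHd_coe (p : Hd) (hp : IsInnerFn p) (f : Hd) :
    (((prodHd p hp f : Hd) : Ltwo) : Tc → ℂ) =ᵐ[muc]
      fun x => ((p : Ltwo) : Tc → ℂ) x * ((f : Ltwo) : Tc → ℂ) x :=
  MemLp.coeFn_toLp (memLp_prod p hp f)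

theorem ipH_oneH (g : Hd) : ipH g oneH = fourierCoeff ((g : Ltwo) : Tc → ℂ) 0 := by
  rw [← fourierBasis_repr, HilbertBasis.repr_apply_apply]
  show (@inner ℂ Ltwo _ ((oneH : Hd) : Ltwo) (g : Ltwo)) = _
  congr 1
  show (fourierLp 2 0 : Ltwo) = fourierBasis 0
  rw [coe_fourierBasis]

theorem P2_coe (q : Hd) : P2 ((q : Ltwo)) = q :=
  Submodule.orthogonalProjectionOnto_mem_subspace_eq_self q

theorem fourier_one_neg_one (x : Tc) : (fourier 1 x : ℂ) * fourier (-1) x = 1 := by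
  rw [← fourier_add]
  norm_num

/-- For an inner function `p` with `p̂(0) ≠ 0`: `pH² ∩ 𝟙^⊥ = zpH²` and
`S*(pH² ∩ 𝟙^⊥) = pH²`. -/
theorem inner_mult_near_invariance (p : Hd) (hp : IsInnerFn p)
    (hp0 : ipH p oneH ≠ 0) :
    {g : Hd | g ∈ mulSetHd p Set.univ ∧ ipH g oneH = 0} =
      {g : Hd | ∃ f : Hd, ((g : Ltwo) : Tc → ℂ) =ᵐ[muc]
        fun x => fourier 1 x * ((p : Ltwo) : Tc → ℂ) x * ((f : Ltwo) : Tc → ℂ) x} ∧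
    SstarOp '' {g : Hd | g ∈ mulSetHd p Set.univ ∧ ipH g oneH = 0} = mulSetHd p Set.univ := by
  have hp0' : fourierCoeff ((p : Ltwo) : Tc → ℂ) 0 ≠ 0 := by rwa [ipH_oneH] at hp0
  have hAB : {g : Hd | g ∈ mulSetHd p Set.univ ∧ ipH g oneH = 0} =
      {g : Hd | ∃ f : Hd, ((g : Ltwo) : Tc → ℂ) =ᵐ[muc]
        fun x => fourier 1 x * ((p : Ltwo) : Tc → ℂ) x * ((f : Ltwo) : Tc → ℂ) x} := by
    ext g
    constructor
    · rintro ⟨⟨f, -, hgf⟩, h0⟩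
      rw [ipH_oneH, fourierCoeff_congr_ae hgf, fourierCoeff_prod_zero] at h0
      have hf0 : fourierCoeff ((f : Ltwo) : Tc → ℂ) 0 = 0 :=
        (mul_eq_zero.mp h0).resolve_left hp0'
      refine ⟨⟨mulF (-1) (f : Ltwo), ?_⟩, ?_⟩
      · rw [mem_Hardy_iff]
        intro n hn
        rw [fourierCoeff_congr_ae (mulF_coe (-1) (f : Ltwo)) n, fourierCoeff_fourier_mul]
        by_cases h : n - (-1) < 0
        · exact coeff_neg_zero f h
        · rw [show n - (-1) = 0 by omega]
          exact hf0
      · filter_upwards [hgf, mulF_coe (-1) (f : Ltwo)] with x hx1 hx2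
        show _ = fourier 1 x * ((p : Ltwo) : Tc → ℂ) x * (mulF (-1) (f : Ltwo) : Tc → ℂ) x
        rw [hx1, hx2]
        linear_combination (-(((p : Ltwo) : Tc → ℂ) x * ((f : Ltwo) : Tc → ℂ) x)) *
          fourier_one_neg_one x
    · rintro ⟨f, hgf⟩
      have hgf' : ((g : Ltwo) : Tc → ℂ) =ᵐ[muc]
          fun x => fourier 1 x * (((p : Ltwo) : Tc → ℂ) x * ((f : Ltwo) : Tc → ℂ) x) :=
        hgf.mono fun x hx => by dsimp only at hx ⊢; rw [hx, mul_assoc]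
      refine ⟨⟨Sop f, Set.mem_univ _, ?_⟩, ?_⟩
      · filter_upwards [hgf, mulF_coe 1 (f : Ltwo)] with x hx1 hx2
        show _ = ((p : Ltwo) : Tc → ℂ) x * (mulF 1 (f : Ltwo) : Tc → ℂ) x
        rw [hx1, hx2]
        ring
      · rw [ipH_oneH, fourierCoeff_congr_ae hgf' 0, fourierCoeff_fourier_mul]
        exact fourierCoeff_prod_neg p f (by norm_num)
  refine ⟨hAB, ?_⟩
  ext g'
  constructor
  · rintro ⟨g, hg, rfl⟩
    rw [hAB] at hg
    obtain ⟨f, hgf⟩ := hg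
    have hkey : mulF (-1) (g : Ltwo) = ((prodHd p hp f : Hd) : Ltwo) := by
      refine Lp_ext' ?_
      filter_upwards [mulF_coe (-1) (g : Ltwo), hgf, prodHd_coe p hp f] with x h1 h2 h3
      rw [h1, h2, h3]
      linear_combination (((p : Ltwo) : Tc → ℂ) x * ((f : Ltwo) : Tc → ℂ) x) *
        fourier_one_neg_one x
    have hS : SstarOp g = prodHd p hp f := by
      unfold SstarOp
      rw [hkey]
      exact P2_coe _
    rw [hS]
    exact ⟨f, Set.mem_univ _, prodHd_coe p hp f⟩
  · rintro ⟨f, -, hgf⟩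
    refine ⟨Sop g', ?_, ?_⟩
    · rw [hAB]
      refine ⟨f, ?_⟩
      filter_upwards [mulF_coe 1 (g' : Ltwo), hgf] with x h1 h2
      show (mulF 1 (g' : Ltwo) : Tc → ℂ) x = _
      rw [h1, h2]
      ring
    · have hkey : mulF (-1) ((Sop g' : Hd) : Ltwo) = (g' : Ltwo) := by
        refine Lp_ext' ?_
        filter_upwards [mulF_coe (-1) ((Sop g' : Hd) : Ltwo), mulF_coe 1 (g' : Ltwo)]
          with x h1 h2
        rw [h1]
        show fourier (-1) x * (mulF 1 (g' : Ltwo) : Tc → ℂ) x = _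
        rw [h2]
        linear_combination (((g' : Ltwo) : Tc → ℂ) x) * fourier_one_neg_one x
      show SstarOp (Sop g') = g'
      unfold SstarOp
      rw [hkey]
      exact P2_coe _


end HankelSchmidt
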